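/- Let s : ℕ → {1,…,N} be a sequence of arm selections by a player, let τ(t,α) = min{⌈λt^α⌉, t} and nᵢ(t,α) = Σ_{d=t−τ(t,α)+1}^{t} 1{s(d)=i}. Fix an epoch {1+φ(g−1),…,φ(g)} with φ(g) = ⌊(λ(1−α)g)^{1/(1−α)}⌋, and let t̃ be in this epoch with t̃ ≠ 1+φ(g−1). Then every time instant in {2+φ(g−1),…,t̃} lies in the window {t̃ − τ(t̃,α)+1,…,t̃}, and hence Σ_{d=2+φ(g−1)}^{t̃} 1{s(d)=i} ≤ nᵢ(t̃,α). -/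

import Mathlib

set_option maxHeartbeats 1000000 in
/-- Window containment: within the `g`-th epoch, the sliding window at any non-initial
time `tt` contains every instant from `2 + φ(g-1)` on, and hence the per-epoch selection
count of an arm `i` is bounded by `nᵢ(tt, α)`. -/
theorem stmt_11 (N : ℕ) (s : ℕ → ℕ) (hs : ∀ d, s d ∈ Finset.Icc 1 N)
    (lam α : ℝ) (hα : α ∈ Set.Ioo (0:ℝ) 1) (hlam : 1 ≤ lam * (1 - α))
    (τ : ℕ → ℕ) (hτ : ∀ t : ℕ, τ t = min ⌈lam * (t : ℝ) ^ α⌉₊ t)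
    (φ : ℕ → ℕ) (hφ : ∀ g, φ g = ⌊(lam * (1 - α) * (g : ℝ)) ^ (1 / (1 - α))⌋₊)
    (g : ℕ) (hg : 1 ≤ g) (tt : ℕ) (ht1 : φ (g - 1) + 2 ≤ tt) (ht2 : tt ≤ φ g)
    (i : ℕ) :
    (∀ d, φ (g - 1) + 2 ≤ d → d ≤ tt → tt - τ tt + 1 ≤ d) ∧
      (∑ d ∈ Finset.Icc (φ (g - 1) + 2) tt, if s d = i then 1 else 0) ≤
        ∑ d ∈ Finset.Icc (tt - τ tt + 1) tt, if s d = i then 1 else 0 := by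
  obtain ⟨hα0, hα1⟩ := hα
  have h1α : (0:ℝ) < 1 - α := by linarith
  have hlam0 : (0:ℝ) < lam := by nlinarith
  set A : ℝ := lam * (1 - α) with hA
  set p : ℝ := 1 / (1 - α) with hp
  have hp1 : (1:ℝ) ≤ p := by rw [hp, le_div_iff₀ h1α]; linarith
  have hpA : p * A = lam := by rw [hp, hA]; field_simp
  have hpα : p * α = p - 1 := by rw [hp]; field_simp; ring
  have hG1 : ((g - 1 : ℕ) : ℝ) = (g : ℝ) - 1 := by
    rw [Nat.cast_sub hg]; norm_num
  set G : ℝ := (g : ℝ) with hGdef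
  have hG : (1:ℝ) ≤ G := by rw [hGdef]; exact_mod_cast hg
  have hx0 : (0:ℝ) < A * G := by nlinarith
  set T : ℝ := (tt : ℝ) with hT
  have hT2 : (2:ℝ) ≤ T := by
    have h : 2 ≤ tt := le_trans (by omega) ht1
    rw [hT]; exact_mod_cast h
  have hT0 : (0:ℝ) < T := by linarith
  have hTα : (0:ℝ) < T ^ α := Real.rpow_pos_of_pos hT0 _
  -- the main real inequality
  have hmain : T ≤ ((φ (g - 1) : ℝ) + 1) + lam * T ^ α := by
    have hφ0 : (0:ℝ) ≤ (φ (g - 1) : ℝ) := by positivity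
    rcases le_total (T ^ (1 - α)) lam with hcase | hcase
    · -- small tt : T ≤ lam * T^α
      have h1 : T ^ (1 - α) * T ^ α = T := by
        rw [← Real.rpow_add hT0]; norm_num
      have h2 : T ^ (1 - α) * T ^ α ≤ lam * T ^ α :=
        mul_le_mul_of_nonneg_right hcase hTα.le
      nlinarith
    · -- tt large enough that x ↦ x - lam x^α is increasing on [T, u]
      set u : ℝ := (A * G) ^ p with hu
      set v : ℝ := (A * ((g - 1 : ℕ) : ℝ)) ^ p with hv
      have hu0 : (0:ℝ) ≤ u := Real.rpow_nonneg hx0.le _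
      have hTu : T ≤ u := by
        have h1 : (tt : ℝ) ≤ (φ g : ℝ) := by exact_mod_cast ht2
        have h2 : (φ g : ℝ) ≤ u := by
          rw [hφ g]; exact Nat.floor_le hu0
        exact le_trans h1 h2
      have hvφ : v ≤ (φ (g - 1) : ℝ) + 1 := by
        rw [hφ (g - 1)]
        exact (Nat.lt_floor_add_one _).le
      -- Step A : T - lam * T^α ≤ u - lam * u^α
      have hstepA : T - lam * T ^ α ≤ u - lam * u ^ α := by
        have hs1 : (-1:ℝ) ≤ (u - T) / T := by
          have := div_nonneg (by linarith : (0:ℝ) ≤ u - T) hT0.le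
          linarith
        have hbern : (1 + (u - T) / T) ^ α ≤ 1 + α * ((u - T) / T) :=
          rpow_one_add_le_one_add_mul_self hs1 hα0.le hα1.le
        have huT : 1 + (u - T) / T = u / T := by field_simp; ring
        rw [huT] at hbern
        have hdiv : (u / T) ^ α = u ^ α / T ^ α :=
          Real.div_rpow hu0 hT0.le _
        rw [hdiv] at hbern
        -- multiply by T^α : u^α ≤ T^α + α * T^α * (u-T)/T
        have h3 : u ^ α ≤ T ^ α + α * T ^ α * ((u - T) / T) := by
          have := mul_le_mul_of_nonneg_right hbern hTα.le
          calc u ^ α = u ^ α / T ^ α * T ^ α := by field_simp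
          _ ≤ (1 + α * ((u - T) / T)) * T ^ α := this
          _ = T ^ α + α * T ^ α * ((u - T) / T) := by ring
        -- lam * T^α / T ≤ 1
        have h4 : lam * T ^ α ≤ T := by
          have h5 : T ^ (1 - α) * T ^ α = T := by
            rw [← Real.rpow_add hT0]; norm_num
          nlinarith
        have huT0 : 0 ≤ u - T := by linarith
        have h6 : lam * (u ^ α - T ^ α) ≤ lam * (α * T ^ α * ((u - T) / T)) := by
          have := mul_le_mul_of_nonneg_left (by linarith : u ^ α - T ^ α ≤ α * T ^ α * ((u - T) / T)) hlam0.le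
          linarith
        have h7 : lam * (α * T ^ α * ((u - T) / T)) ≤ u - T := by
          have h8 : lam * (α * T ^ α * ((u - T) / T)) = α * (lam * T ^ α / T) * (u - T) := by
            ring
          rw [h8]
          have h9 : lam * T ^ α / T ≤ 1 := by
            rw [div_le_one hT0]; exact h4
          have h10 : (0:ℝ) ≤ lam * T ^ α / T :=
            div_nonneg (mul_nonneg hlam0.le hTα.le) hT0.le
          have h11 : α * (lam * T ^ α / T) ≤ 1 :=
            mul_le_one₀ hα1.le h10 h9
          calc α * (lam * T ^ α / T) * (u - T) ≤ 1 * (u - T) :=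
                mul_le_mul_of_nonneg_right h11 huT0
          _ = u - T := one_mul _
        linarith
      -- Step B : u - lam * u^α ≤ v
      have hstepB : u - lam * u ^ α ≤ v := by
        have hy0 : (0:ℝ) ≤ A * ((g - 1 : ℕ) : ℝ) := by
          rw [hG1]; nlinarith
        have hyx : A * ((g - 1 : ℕ) : ℝ) = A * G - A := by rw [hG1]; ring
        have hs1 : (-1:ℝ) ≤ -A / (A * G) := by
          rw [neg_div, neg_le_neg_iff, div_le_one hx0]; nlinarith
        have hbern : 1 + p * (-A / (A * G)) ≤ (1 + -A / (A * G)) ^ p :=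
          one_add_mul_self_le_rpow_one_add hs1 hp1
        have h1 : 1 + -A / (A * G) = (A * ((g - 1 : ℕ) : ℝ)) / (A * G) := by
          rw [hyx]; field_simp; ring
        rw [h1] at hbern
        have h2 : ((A * ((g - 1 : ℕ) : ℝ)) / (A * G)) ^ p = v / u := by
          rw [hv, hu, Real.div_rpow hy0 hx0.le]
        rw [h2] at hbern
        have hu0' : (0:ℝ) < u := Real.rpow_pos_of_pos hx0 _
        have h3 : (1 + p * (-A / (A * G))) * u ≤ v := by
          have := mul_le_mul_of_nonneg_right hbern hu0'.le
          calc (1 + p * (-A / (A * G))) * u ≤ v / u * u := this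
          _ = v := by field_simp
        -- now compute (1 + p * (-A/(A*G))) * u = u - lam * u^α
        have h4 : u ^ α = (A * G) ^ (p - 1) := by
          rw [hu, ← Real.rpow_mul hx0.le, ← hpα]
        have h5 : (A * G) ^ (p - 1) = u / (A * G) := by
          rw [hu, Real.rpow_sub hx0, Real.rpow_one]
        have h6 : (1 + p * (-A / (A * G))) * u = u - lam * u ^ α := by
          rw [h4, h5, ← hpA]; ring
        linarith [h6 ▸ h3]
      linarith
  -- deduce the ℕ inequality
  have hceil : lam * T ^ α ≤ (⌈lam * T ^ α⌉₊ : ℝ) := Nat.le_ceil _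
  have hnat : tt ≤ φ (g - 1) + 1 + ⌈lam * (tt : ℝ) ^ α⌉₊ := by
    have : (tt : ℝ) ≤ ((φ (g - 1) + 1 + ⌈lam * (tt : ℝ) ^ α⌉₊ : ℕ) : ℝ) := by
      push_cast
      linarith
    exact_mod_cast this
  have key : tt - τ tt + 1 ≤ φ (g - 1) + 2 := by
    rw [hτ]
    omega
  constructor
  · intro d hd1 hd2
    omega
  · apply Finset.sum_le_sum_of_subset
    exact Finset.Icc_subset_Icc key le_rfl
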